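/- Let k ≥ 2 and let G be a digraph on vertex set {1,…,2^k}. If the extended binary Hamming code H̃_k is a 2-perfect G-code, then every vertex has G-weight at most 2; that is, for every vertex v, the set consisting of v together with all vertices reachable from v by a directed path has size at most 2. -/

import Mathlib

open Classical

noncomputable def wtG {V : Type*} [Fintype V] (E : V → V → Prop) (x : V → ZMod 2) : ℕ :=
  (Finset.univ.filter (fun v => ∃ u, x u ≠ 0 ∧ Relation.ReflTransGen E u v)).card

noncomputable def dG {V : Type*} [Fintype V] (E : V → V → Prop) (x y : V → ZMod 2) : ℕ :=
  wtG E (x - y)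

def IsCovering {β : Type*} (d : β → β → ℕ) (C : Set β) (r : ℕ) : Prop :=
  ∀ x, ∃ c ∈ C, d c x ≤ r

def IsPacking {β : Type*} (d : β → β → ℕ) (C : Set β) (r : ℕ) : Prop :=
  ∀ c₁ ∈ C, ∀ c₂ ∈ C, c₁ ≠ c₂ → ∀ x, ¬(d c₁ x ≤ r ∧ d c₂ x ≤ r)

def extHamming (k : ℕ) : Set (Fin (2 ^ k) → ZMod 2) :=
  {x | (∑ i, x i) = 0 ∧
    ∀ j < k, (∑ i ∈ Finset.univ.filter (fun i : Fin (2 ^ k) => Nat.testBit i.val j), x i) = 0}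

lemma zmod2_ne_zero {a : ZMod 2} (h : a ≠ 0) : a = 1 := by revert h; revert a; decide

lemma hamming_le_wtG {V : Type*} [Fintype V] (E : V → V → Prop) (x : V → ZMod 2) :
    (Finset.univ.filter (fun u => x u ≠ 0)).card ≤ wtG E x := by
  apply Finset.card_le_card
  intro u hu
  simp only [Finset.mem_filter, Finset.mem_univ, true_and] at hu ⊢
  exact ⟨u, hu, Relation.ReflTransGen.refl⟩

lemma wtG_congr {V : Type*} [Fintype V] (E : V → V → Prop) {x y : V → ZMod 2}
    (h : ∀ u, x u ≠ 0 ↔ y u ≠ 0) : wtG E x = wtG E y := by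
  unfold wtG
  congr 1
  apply Finset.filter_congr
  intro w _
  constructor <;> rintro ⟨u, hu, hr⟩
  · exact ⟨u, (h u).mp hu, hr⟩
  · exact ⟨u, (h u).mpr hu, hr⟩

lemma min_weight {k : ℕ} {x : Fin (2 ^ k) → ZMod 2} (hx : x ∈ extHamming k) (hne : x ≠ 0) :
    4 ≤ (Finset.univ.filter (fun u => x u ≠ 0)).card := by
  set S := Finset.univ.filter (fun u => x u ≠ 0) with hS
  have hmem : ∀ i, i ∈ S ↔ x i ≠ 0 := by intro i; simp [hS]
  -- card even
  have hsum : (∑ i, x i) = (S.card : ZMod 2) := by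
    rw [← Finset.sum_filter_ne_zero Finset.univ]
    rw [Finset.sum_congr rfl (fun i hi => zmod2_ne_zero ((hmem i).mp (by simpa [hS] using hi)))]
    simp [hS]
  have heven : (2 : ℕ) ∣ S.card := by
    have := hx.1
    rw [hsum] at this
    exact (ZMod.natCast_eq_zero_iff _ _).mp this
  have hpos : 0 < S.card := by
    rcases Function.ne_iff.mp hne with ⟨i, hi⟩
    exact Finset.card_pos.mpr ⟨i, (hmem i).mpr (by simpa using hi)⟩
  have hne2 : S.card ≠ 2 := by
    intro h2
    obtain ⟨a, b, hab, hSab⟩ := Finset.card_eq_two.mp h2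
    have hxval : ∀ i, x i = (if i = a then (1 : ZMod 2) else 0) + (if i = b then 1 else 0) := by
      intro i
      by_cases hia : i = a
      · subst hia
        have : x i ≠ 0 := (hmem i).mp (by rw [hSab]; simp)
        simp [zmod2_ne_zero this, hab]
      · by_cases hib : i = b
        · subst hib
          have : x i ≠ 0 := (hmem i).mp (by rw [hSab]; simp)
          simp [zmod2_ne_zero this, hia]
        · have : i ∉ S := by rw [hSab]; simp [hia, hib]
          have := not_not.mp (fun h => this ((hmem i).mpr h))
          simp [this, hia, hib]
    have hbit : ∀ j, a.val.testBit j = b.val.testBit j := by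
      intro j
      by_cases hj : j < k
      · have := hx.2 j hj
        rw [Finset.sum_congr rfl (fun i _ => hxval i)] at this
        rw [Finset.sum_add_distrib, Finset.sum_ite_eq' , Finset.sum_ite_eq'] at this
        simp only [Finset.mem_filter, Finset.mem_univ, true_and] at this
        by_cases ha : a.val.testBit j <;> by_cases hb : b.val.testBit j <;>
          simp_all
      · rw [Nat.testBit_lt_two_pow, Nat.testBit_lt_two_pow]
        · exact lt_of_lt_of_le b.isLt (Nat.pow_le_pow_right (by norm_num) (le_of_not_gt hj))
        · exact lt_of_lt_of_le a.isLt (Nat.pow_le_pow_right (by norm_num) (le_of_not_gt hj))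
    exact hab (Fin.ext (Nat.eq_of_testBit_eq hbit))
  omega


theorem stmt_12 {k : ℕ} (hk : 2 ≤ k)
    (E : Fin (2 ^ k) → Fin (2 ^ k) → Prop) (hirrefl : ∀ v, ¬ E v v)
    (hperf : IsCovering (dG E) (extHamming k) 2 ∧
      IsPacking (dG E) (extHamming k) 2) :
    ∀ v : Fin (2 ^ k),
      (Finset.univ.filter (fun u => Relation.ReflTransGen E v u)).card ≤ 2 := by
  intro v
  by_contra hcard
  push_neg at hcard
  set e : Fin (2 ^ k) → ZMod 2 := fun u => if u = v then 1 else 0 with he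
  have hwte : wtG E e = (Finset.univ.filter (fun u => Relation.ReflTransGen E v u)).card := by
    unfold wtG
    congr 1
    ext w
    simp only [Finset.mem_filter, Finset.mem_univ, true_and]
    simp only [he]
    constructor
    · rintro ⟨u, hu, hr⟩
      have huv : u = v := by by_contra h; simp [h] at hu
      subst huv; exact hr
    · intro hr; exact ⟨v, by simp, hr⟩
  obtain ⟨c, hc, hd⟩ := hperf.1 e
  unfold dG at hd
  by_cases hc0 : c = 0
  · subst hc0
    have h0 : wtG E (0 - e) = wtG E e := wtG_congr E (by intro u; simp)
    omega
  · have h4 := min_weight hc hc0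
    have hsub : (Finset.univ.filter (fun u => c u ≠ 0)) \ {v} ⊆
        Finset.univ.filter (fun u => (c - e) u ≠ 0) := by
      intro u hu
      simp only [Finset.mem_sdiff, Finset.mem_filter, Finset.mem_univ, true_and,
        Finset.mem_singleton] at hu ⊢
      simpa [he, hu.2] using hu.1
    have hle := Finset.card_le_card hsub
    have hsd := Finset.le_card_sdiff ({v} : Finset (Fin (2 ^ k)))
      (Finset.univ.filter (fun u => c u ≠ 0))
    have hham := hamming_le_wtG E (c - e)
    simp only [Finset.card_singleton] at hsd
    omega
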